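/- Let (X,d) be a separable metric space with X = A ∪ B, and let V be either the Euclidean space ℝ^m or the separable infinite-dimensional Hilbert space ℓ². Let D ≥ 1, and let α : A × A → ℝ and β : B × B → ℝ be continuous functions. Assume that for every finite subset Y ⊆ X there exists a non-contracting embedding f : Y → V with ‖f‖_Lip ≤ D such that ‖f(x) − f(y)‖ ≤ α(x,y) for all x,y ∈ A ∩ Y and ‖f(x) − f(y)‖ ≤ β(x,y) for all x,y ∈ B ∩ Y. Then there exists a non-contracting embedding f : X → V with ‖f‖_Lip ≤ D such that ‖f(x) − f(y)‖ ≤ α(x,y) for all x,y ∈ A and ‖f(x) − f(y)‖ ≤ β(x,y) for all x,y ∈ B. -/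

import Mathlib

open scoped InnerProductSpace
noncomputable section

local notation "L2" => lp (fun _ : ℕ => ℝ) 2

private def sing (i : ℕ) (a : ℝ) : L2 := lp.single 2 i a

private lemma sing_apply_ne {i k : ℕ} (h : k ≠ i) : (sing i 1 : ℕ → ℝ) k = 0 :=
  lp.single_apply_ne 2 i _ h

private lemma inner_sing_left (i : ℕ) (f : L2) : ⟪sing i 1, f⟫_ℝ = f i := by
  rw [sing, lp.inner_single_left]; simp [RCLike.inner_apply]

private lemma flag_embed {V : Type*} [NormedAddCommGroup V] [InnerProductSpace ℝ V] :
    ∀ (n : ℕ) (u : Fin n → V), ∃ w : Fin n → L2,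
      (∀ i j, ⟪w i, w j⟫_ℝ = ⟪u i, u j⟫_ℝ) ∧
      (∀ i : Fin n, ∀ k : ℕ, (i : ℕ) < k → (w i : ℕ → ℝ) k = 0) := by
  intro n
  induction n with
  | zero => exact fun u => ⟨fun i => 0, fun i => i.elim0, fun i => i.elim0⟩
  | succ n IH =>
    intro u
    obtain ⟨w, hw, hsupp⟩ := IH (u ∘ Fin.castSucc)
    set W : Submodule ℝ V := Submodule.span ℝ (Set.range (u ∘ Fin.castSucc)) with hW
    haveI : FiniteDimensional ℝ W := FiniteDimensional.span_of_finite ℝ (Set.finite_range _)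
    set p : V := (W.orthogonalProjectionOnto (u (Fin.last n)) : V) with hp
    set q : V := u (Fin.last n) - p with hqdef
    have hqW : q ∈ Wᗮ := W.sub_starProjection_mem_orthogonal (u (Fin.last n))
    have hpW : p ∈ W := SetLike.coe_mem _
    obtain ⟨c, hc⟩ := (Submodule.mem_span_range_iff_exists_fun ℝ).1 hpW
    set wl : L2 := (∑ i, c i • w i) + ‖q‖ • sing n 1 with hwl
    -- coordinates of wl beyond n vanish... and coordinate facts
    have hwi_n : ∀ (i : Fin n) (k : ℕ), n ≤ k → (w i : ℕ → ℝ) k = 0 := fun i k hk =>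
      hsupp i k (lt_of_lt_of_le i.isLt hk)
    have hsum_coe : ∀ k : ℕ, ((∑ i, c i • w i : L2) : ℕ → ℝ) k = ∑ i, c i * (w i : ℕ → ℝ) k := by
      intro k
      rw [lp.coeFn_sum]
      simp only [Finset.sum_apply]
      refine Finset.sum_congr rfl fun i _ => ?_
      rw [lp.coeFn_smul]; rfl
    have hsing_inner : ∀ i : Fin n, ⟪sing n 1, w i⟫_ℝ = 0 := by
      intro i
      rw [inner_sing_left]
      exact hwi_n i n le_rfl
    have hQ : ∀ i : Fin n, ⟪q, u (Fin.castSucc i)⟫_ℝ = 0 := by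
      intro i
      rw [real_inner_comm]
      exact hqW _ (Submodule.subset_span ⟨i, rfl⟩)
    have hpq : ⟪p, q⟫_ℝ = 0 := hqW p hpW
    -- inner products with wl
    have hwl_w : ∀ j : Fin n, ⟪wl, w j⟫_ℝ = ⟪u (Fin.last n), u (Fin.castSucc j)⟫_ℝ := by
      intro j
      rw [hwl, inner_add_left, sum_inner, real_inner_smul_left, hsing_inner j, mul_zero, add_zero]
      have : ∀ i : Fin n, ⟪c i • w i, w j⟫_ℝ = c i * ⟪u (Fin.castSucc i), u (Fin.castSucc j)⟫_ℝ := by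
        intro i; rw [real_inner_smul_left, hw i j]; rfl
      rw [Finset.sum_congr rfl fun i _ => this i]
      have hpu : ⟪p, u (Fin.castSucc j)⟫_ℝ = ∑ i, c i * ⟪u (Fin.castSucc i), u (Fin.castSucc j)⟫_ℝ := by
        rw [← hc, sum_inner]
        refine Finset.sum_congr rfl fun i _ => ?_
        rw [real_inner_smul_left]; rfl
      rw [← hpu]
      have : u (Fin.last n) = p + q := by rw [hqdef]; abel
      rw [this, inner_add_left, hQ j, add_zero]
    have hwl_wl : ⟪wl, wl⟫_ℝ = ⟪u (Fin.last n), u (Fin.last n)⟫_ℝ := by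
      have hsum_p : ⟪(∑ i, c i • w i : L2), (∑ i, c i • w i : L2)⟫_ℝ = ⟪p, p⟫_ℝ := by
        rw [← hc]
        rw [sum_inner, sum_inner]
        refine Finset.sum_congr rfl fun i _ => ?_
        rw [inner_sum, inner_sum]
        refine Finset.sum_congr rfl fun j _ => ?_
        rw [real_inner_smul_left, real_inner_smul_left, real_inner_smul_right,
          real_inner_smul_right, hw i j]
      have hSsing : ⟪(∑ i, c i • w i : L2), sing n 1⟫_ℝ = 0 := by
        rw [sum_inner]
        refine Finset.sum_eq_zero fun i _ => ?_
        rw [real_inner_smul_left, real_inner_comm, hsing_inner i, mul_zero]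
      have hsingS : ⟪(sing n 1 : L2), (∑ i, c i • w i : L2)⟫_ℝ = 0 := by
        rw [real_inner_comm]; exact hSsing
      have hss : ⟪(sing n 1 : L2), sing n 1⟫_ℝ = 1 := by
        rw [inner_sing_left, sing, lp.single_apply_self]
      rw [hwl, inner_add_left, inner_add_right, inner_add_right, hsum_p,
        real_inner_smul_left, real_inner_smul_right, real_inner_smul_left,
        real_inner_smul_right, hSsing, hsingS, hss]
      have hul : u (Fin.last n) = p + q := by rw [hqdef]; abel
      have hqp : ⟪q, p⟫_ℝ = 0 := by rw [real_inner_comm]; exact hpq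
      rw [hul, inner_add_left, inner_add_right, inner_add_right, hpq, hqp,
        real_inner_self_eq_norm_sq q]
      ring
    refine ⟨Fin.snoc w wl, ?_, ?_⟩
    · intro i j
      refine Fin.lastCases ?_ ?_ i
      · refine Fin.lastCases ?_ ?_ j
        · simpa using hwl_wl
        · intro j'; simpa using hwl_w j'
      · intro i'
        refine Fin.lastCases ?_ ?_ j
        · simp only [Fin.snoc_castSucc, Fin.snoc_last]
          have h1 : ⟪w i', wl⟫_ℝ = ⟪wl, w i'⟫_ℝ := real_inner_comm _ _
          rw [h1, hwl_w i']
          exact real_inner_comm _ _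
        · intro j'; simpa using hw i' j'
    · intro i k
      refine Fin.lastCases ?_ (fun i' => ?_) i
      · intro hk2
        simp only [Fin.snoc_last]
        have hkn : n < k := by simpa using hk2
        rw [hwl, lp.coeFn_add, Pi.add_apply, hsum_coe, lp.coeFn_smul, Pi.smul_apply]
        rw [sing_apply_ne (Nat.ne_of_gt hkn)]
        simp only [smul_eq_mul, mul_zero, add_zero]
        refine Finset.sum_eq_zero fun i _ => ?_
        rw [hwi_n i k hkn.le, mul_zero]
      · intro hk2
        simp only [Fin.snoc_castSucc]
        exact hsupp i' k (by simpa using hk2)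
private lemma eq_of_sq_eq' {a b : ℝ} (ha : 0 ≤ a) (hb : 0 ≤ b) (h : a ^ 2 = b ^ 2) : a = b :=
  (sq_eq_sq₀ ha hb).1 h

private lemma gauge_exists {V : Type*} [NormedAddCommGroup V] [InnerProductSpace ℝ V]
    (hV : (∃ m : ℕ, Nonempty (V ≃ₗᵢ[ℝ] EuclideanSpace ℝ (Fin m))) ∨
      Nonempty (V ≃ₗᵢ[ℝ] lp (fun _ : ℕ => ℝ) 2)) :
    ∃ K : ℕ → ℝ → Set V, (∀ i R, IsCompact (K i R)) ∧
      ∀ (n : ℕ) (u : Fin n → V), ∃ g : Fin n → V,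
        (∀ i j, dist (g i) (g j) = dist (u i) (u j)) ∧
        ∀ (i : Fin n) (R : ℝ), ‖u i‖ ≤ R → g i ∈ K (i : ℕ) R := by
  rcases hV with ⟨m, ⟨e⟩⟩ | he
  · haveI : FiniteDimensional ℝ V := LinearEquiv.finiteDimensional e.symm.toLinearEquiv
    refine ⟨fun _ R => Metric.closedBall 0 R, fun i R => isCompact_closedBall 0 R, ?_⟩
    intro n u
    exact ⟨u, fun i j => rfl, fun i R hR => by
      simpa [Metric.mem_closedBall, dist_zero_right] using hR⟩
  · obtain ⟨e⟩ := he
    set P : ℕ → Submodule ℝ (lp (fun _ : ℕ => ℝ) 2) :=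
      fun i => Submodule.span ℝ (Set.range fun k : Fin (i + 1) => sing (k : ℕ) 1) with hP
    haveI : ∀ i, FiniteDimensional ℝ (P i) := fun i =>
      FiniteDimensional.span_of_finite ℝ (Set.finite_range _)
    refine ⟨fun i R => e.symm '' ((P i : Set (lp (fun _ : ℕ => ℝ) 2)) ∩ Metric.closedBall 0 R),
      ?_, ?_⟩
    · intro i R
      have hc : IsCompact ((P i : Set (lp (fun _ : ℕ => ℝ) 2)) ∩ Metric.closedBall 0 R) := by
        have h1 : IsCompact (Metric.closedBall (0 : P i) R) := isCompact_closedBall 0 R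
        have h2 : ((P i : Set (lp (fun _ : ℕ => ℝ) 2)) ∩ Metric.closedBall 0 R) =
            (Subtype.val '' Metric.closedBall (0 : P i) R) := by
          ext x
          simp only [Set.mem_inter_iff, Set.mem_image, Metric.mem_closedBall, dist_zero_right]
          constructor
          · rintro ⟨hx, hn⟩; exact ⟨⟨x, hx⟩, by simpa using hn, rfl⟩
          · rintro ⟨y, hy, rfl⟩; exact ⟨y.2, by simpa using hy⟩
        rw [h2]
        exact h1.image continuous_subtype_val
      exact hc.image e.symm.continuous
    · intro n u
      obtain ⟨w, hw, hsupp⟩ := flag_embed n (fun i => e (u i))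
      have hnorm : ∀ i, ‖w i‖ = ‖u i‖ := by
        intro i
        have h1 : ‖w i‖ ^ 2 = ‖u i‖ ^ 2 := by
          rw [← real_inner_self_eq_norm_sq, hw i i, real_inner_self_eq_norm_sq, e.norm_map]
        exact eq_of_sq_eq' (norm_nonneg _) (norm_nonneg _) h1
      have hdists : ∀ i j, dist (w i) (w j) = dist (u i) (u j) := by
        intro i j
        rw [dist_eq_norm, dist_eq_norm]
        have h1 : ‖w i - w j‖ ^ 2 = ‖u i - u j‖ ^ 2 := by
          rw [norm_sub_sq_real, norm_sub_sq_real, hnorm i, hnorm j, hw i j]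
          have : ⟪e (u i), e (u j)⟫_ℝ = ⟪u i, u j⟫_ℝ := e.inner_map_map (u i) (u j)
          rw [this]
        exact eq_of_sq_eq' (norm_nonneg _) (norm_nonneg _) h1
      refine ⟨fun i => e.symm (w i), ?_, ?_⟩
      · intro i j
        rw [e.symm.dist_map]
        exact hdists i j
      · intro i R hR
        refine Set.mem_image_of_mem _ ⟨?_, ?_⟩
        · -- w i ∈ P i
          have hrepr : w i = ∑ k ∈ Finset.range ((i : ℕ) + 1), (w i : ℕ → ℝ) k • sing k 1 := by
            apply lp.ext
            funext mm
            rw [lp.coeFn_sum]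
            simp only [Finset.sum_apply]
            have hterm : ∀ k, ((((w i : lp _ 2) : ℕ → ℝ) k • sing k 1 : lp (fun _ : ℕ => ℝ) 2) : ℕ → ℝ) mm
                = (w i : ℕ → ℝ) k * (sing k 1 : ℕ → ℝ) mm := by
              intro k; rw [lp.coeFn_smul]; rfl
            rw [Finset.sum_congr rfl fun k _ => hterm k]
            by_cases hm : mm ≤ (i : ℕ)
            · rw [Finset.sum_eq_single mm]
              · rw [sing, lp.single_apply_self, mul_one]
              · intro k _ hk
                rw [sing_apply_ne (Ne.symm hk), mul_zero]
              · intro hmem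
                exact absurd (Finset.mem_range.2 (Nat.lt_succ_of_le hm)) hmem
            · rw [hsupp i mm (lt_of_not_ge hm)]
              refine (Finset.sum_eq_zero fun k hk => ?_).symm
              have hkm : mm ≠ k := by
                intro hkk
                exact hm (hkk ▸ Nat.le_of_lt_succ (Finset.mem_range.1 hk))
              rw [sing_apply_ne hkm, mul_zero]
          rw [hrepr]
          refine Submodule.sum_mem _ fun k hk => Submodule.smul_mem _ _ ?_
          refine Submodule.subset_span ⟨⟨k, Finset.mem_range.1 hk⟩, rfl⟩
        · rw [Metric.mem_closedBall, dist_zero_right, hnorm i]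
          exact hR

open Filter Topology

/-- Compactness argument, part II: in addition to part I, if `X = A ∪ B` and the
finite-subset embeddings also satisfy upper bounds `‖f(x)-f(y)‖ ≤ α(x,y)` on
`A ∩ Y` and `‖f(x)-f(y)‖ ≤ β(x,y)` on `B ∩ Y` for continuous functions `α`, `β`,
then there is a global non-contracting embedding with Lipschitz constant at most
`D` satisfying the same bounds on all of `A` and `B`. -/
theorem compactness_argument_with_bounds
    {X : Type*} [MetricSpace X] [TopologicalSpace.SeparableSpace X]
    (A B : Set X) (hAB : A ∪ B = Set.univ)
    (V : Type*) [NormedAddCommGroup V] [InnerProductSpace ℝ V]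
    (hV : (∃ m : ℕ, Nonempty (V ≃ₗᵢ[ℝ] EuclideanSpace ℝ (Fin m))) ∨
      Nonempty (V ≃ₗᵢ[ℝ] lp (fun _ : ℕ => ℝ) 2))
    (D : ℝ) (hD : 1 ≤ D)
    (α : A × A → ℝ) (hα : Continuous α)
    (β : B × B → ℝ) (hβ : Continuous β)
    (h : ∀ Y : Finset X, ∃ f : X → V,
      (∀ x ∈ Y, ∀ y ∈ Y,
        dist x y ≤ dist (f x) (f y) ∧ dist (f x) (f y) ≤ D * dist x y) ∧
      (∀ x : X, ∀ y : X, ∀ hx : x ∈ A, ∀ hy : y ∈ A, x ∈ Y → y ∈ Y →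
        dist (f x) (f y) ≤ α (⟨x, hx⟩, ⟨y, hy⟩)) ∧
      (∀ x : X, ∀ y : X, ∀ hx : x ∈ B, ∀ hy : y ∈ B, x ∈ Y → y ∈ Y →
        dist (f x) (f y) ≤ β (⟨x, hx⟩, ⟨y, hy⟩))) :
    ∃ f : X → V,
      (∀ x y : X,
        dist x y ≤ dist (f x) (f y) ∧ dist (f x) (f y) ≤ D * dist x y) ∧
      (∀ x : X, ∀ y : X, ∀ hx : x ∈ A, ∀ hy : y ∈ A,
        dist (f x) (f y) ≤ α (⟨x, hx⟩, ⟨y, hy⟩)) ∧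
      (∀ x : X, ∀ y : X, ∀ hx : x ∈ B, ∀ hy : y ∈ B,
        dist (f x) (f y) ≤ β (⟨x, hx⟩, ⟨y, hy⟩)) := by
  classical
  rcases isEmpty_or_nonempty X with hX | hX
  · exact ⟨fun _ => 0, fun x => (IsEmpty.false x).elim, fun x => (IsEmpty.false x).elim,
      fun x => (IsEmpty.false x).elim⟩
  have hD0 : (0 : ℝ) < D := lt_of_lt_of_le one_pos hD
  haveI : CompleteSpace V := by
    rcases hV with ⟨m, ⟨e⟩⟩ | he
    · exact e.toIsometryEquiv.completeSpace_iff.2 (by infer_instance)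
    · obtain ⟨e⟩ := he
      exact e.toIsometryEquiv.completeSpace_iff.2 (by infer_instance)
  obtain ⟨K, hKcomp, hgauge⟩ := gauge_exists hV
  -- countable dense subsets of A and B
  obtain ⟨cA, hcAsub, hcAc, hcAd⟩ :=
    (TopologicalSpace.IsSeparable.of_separableSpace A).exists_countable_dense_subset
  obtain ⟨cB, hcBsub, hcBc, hcBd⟩ :=
    (TopologicalSpace.IsSeparable.of_separableSpace B).exists_countable_dense_subset
  have hne : (cA ∪ cB).Nonempty := by
    obtain ⟨x⟩ := hX
    have hx : x ∈ A ∪ B := by rw [hAB]; exact Set.mem_univ x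
    rcases hx with hx | hx
    · exact (closure_nonempty_iff.1 ⟨x, hcAd hx⟩).inl
    · exact (closure_nonempty_iff.1 ⟨x, hcBd hx⟩).inr
  obtain ⟨s, hs⟩ := (hcAc.union hcBc).exists_eq_range hne
  -- approximation properties
  have happroxA : ∀ x ∈ A, ∀ ε : ℝ, 0 < ε → ∃ i, s i ∈ A ∧ dist x (s i) < ε := by
    intro x hx ε hε
    obtain ⟨y, hy, hyd⟩ := Metric.mem_closure_iff.1 (hcAd hx) ε hε
    have : y ∈ Set.range s := by rw [← hs]; exact Set.mem_union_left _ hy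
    obtain ⟨i, rfl⟩ := this
    exact ⟨i, hcAsub hy, hyd⟩
  have happroxB : ∀ x ∈ B, ∀ ε : ℝ, 0 < ε → ∃ i, s i ∈ B ∧ dist x (s i) < ε := by
    intro x hx ε hε
    obtain ⟨y, hy, hyd⟩ := Metric.mem_closure_iff.1 (hcBd hx) ε hε
    have : y ∈ Set.range s := by rw [← hs]; exact Set.mem_union_right _ hy
    obtain ⟨i, rfl⟩ := this
    exact ⟨i, hcBsub hy, hyd⟩
  have happrox : ∀ x : X, ∀ ε : ℝ, 0 < ε → ∃ i, dist x (s i) < ε := by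
    intro x ε hε
    have hx : x ∈ A ∪ B := by rw [hAB]; exact Set.mem_univ x
    rcases hx with hx | hx
    · obtain ⟨i, _, hi⟩ := happroxA x hx ε hε; exact ⟨i, hi⟩
    · obtain ⟨i, _, hi⟩ := happroxB x hx ε hε; exact ⟨i, hi⟩
  -- discrete approximants with values in compact sets
  have hggex : ∀ n : ℕ, ∃ gg : ℕ → V,
      (∀ i j : ℕ, i ≤ n → j ≤ n →
        (dist (s i) (s j) ≤ dist (gg i) (gg j) ∧ dist (gg i) (gg j) ≤ D * dist (s i) (s j)) ∧
        (∀ hi : s i ∈ A, ∀ hj : s j ∈ A, dist (gg i) (gg j) ≤ α (⟨s i, hi⟩, ⟨s j, hj⟩)) ∧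
        (∀ hi : s i ∈ B, ∀ hj : s j ∈ B, dist (gg i) (gg j) ≤ β (⟨s i, hi⟩, ⟨s j, hj⟩))) ∧
      (∀ i ≤ n, gg i ∈ K i (D * dist (s i) (s 0))) := by
    intro n
    obtain ⟨f, hf1, hf2, hf3⟩ := h ((Finset.range (n + 1)).image s)
    have hmem : ∀ i ≤ n, s i ∈ (Finset.range (n + 1)).image s := fun i hi =>
      Finset.mem_image_of_mem s (Finset.mem_range.2 (Nat.lt_succ_of_le hi))
    obtain ⟨g, hgd, hgK⟩ := hgauge (n + 1) (fun i : Fin (n + 1) => f (s (i : ℕ)) - f (s 0))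
    have hgdist : ∀ i j : ℕ, ∀ hi : i ≤ n, ∀ hj : j ≤ n,
        dist (g ⟨i, Nat.lt_succ_of_le hi⟩) (g ⟨j, Nat.lt_succ_of_le hj⟩)
          = dist (f (s i)) (f (s j)) := by
      intro i j hi hj
      rw [hgd]
      exact dist_sub_right _ _ _
    refine ⟨fun i => if hi : i ≤ n then g ⟨i, Nat.lt_succ_of_le hi⟩ else 0, ?_, ?_⟩
    · intro i j hi hj
      simp only [dif_pos hi, dif_pos hj]
      rw [hgdist i j hi hj]
      exact ⟨hf1 _ (hmem i hi) _ (hmem j hj),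
        fun hiA hjA => hf2 _ _ hiA hjA (hmem i hi) (hmem j hj),
        fun hiB hjB => hf3 _ _ hiB hjB (hmem i hi) (hmem j hj)⟩
    · intro i hi
      simp only [dif_pos hi]
      refine hgK ⟨i, Nat.lt_succ_of_le hi⟩ _ ?_
      rw [← dist_eq_norm]
      exact (hf1 _ (hmem i hi) _ (hmem 0 (Nat.zero_le n))).2
  choose gg hggd hggK using hggex
  -- ultrafilter limits
  set 𝒰 : Ultrafilter ℕ := Filter.hyperfilter ℕ with h𝒰
  have hUat : (𝒰 : Filter ℕ) ≤ Filter.atTop := Nat.hyperfilter_le_atTop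
  have hlim : ∀ i : ℕ, ∃ a : V, Tendsto (fun n => gg n i) (𝒰 : Filter ℕ) (𝓝 a) := by
    intro i
    have hev : ∀ᶠ n in (𝒰 : Filter ℕ), gg n i ∈ K i (D * dist (s i) (s 0)) :=
      (Filter.eventually_atTop.2 ⟨i, fun n hn => hggK n i hn⟩).filter_mono hUat
    obtain ⟨a, -, ha⟩ := (hKcomp i (D * dist (s i) (s 0))).ultrafilter_le_nhds
      (Ultrafilter.map (fun n => gg n i) 𝒰)
      (by rw [Ultrafilter.coe_map]; exact Filter.le_principal_iff.2 (Filter.mem_map.2 hev))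
    rw [Ultrafilter.coe_map] at ha
    exact ⟨a, ha⟩
  choose ℓ hℓ using hlim
  have hP12 : ∀ i j : ℕ,
      dist (s i) (s j) ≤ dist (ℓ i) (ℓ j) ∧ dist (ℓ i) (ℓ j) ≤ D * dist (s i) (s j) := by
    intro i j
    have hdist : Tendsto (fun n => dist (gg n i) (gg n j)) (𝒰 : Filter ℕ)
        (𝓝 (dist (ℓ i) (ℓ j))) := (hℓ i).dist (hℓ j)
    have hev : ∀ᶠ n in (𝒰 : Filter ℕ),
        dist (s i) (s j) ≤ dist (gg n i) (gg n j) ∧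
          dist (gg n i) (gg n j) ≤ D * dist (s i) (s j) :=
      (Filter.eventually_atTop.2 ⟨max i j, fun n hn =>
        (hggd n i j (le_trans (le_max_left _ _) hn) (le_trans (le_max_right _ _) hn)).1⟩
        ).filter_mono hUat
    exact ⟨ge_of_tendsto hdist (hev.mono fun n hn => hn.1),
      le_of_tendsto hdist (hev.mono fun n hn => hn.2)⟩
  have hP3 : ∀ i j : ℕ, ∀ hi : s i ∈ A, ∀ hj : s j ∈ A,
      dist (ℓ i) (ℓ j) ≤ α (⟨s i, hi⟩, ⟨s j, hj⟩) := by
    intro i j hi hj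
    have hdist : Tendsto (fun n => dist (gg n i) (gg n j)) (𝒰 : Filter ℕ)
        (𝓝 (dist (ℓ i) (ℓ j))) := (hℓ i).dist (hℓ j)
    refine le_of_tendsto hdist ?_
    refine (Filter.eventually_atTop.2 ⟨max i j, fun n hn => ?_⟩).filter_mono hUat
    exact (hggd n i j (le_trans (le_max_left _ _) hn) (le_trans (le_max_right _ _) hn)).2.1 hi hj
  have hP4 : ∀ i j : ℕ, ∀ hi : s i ∈ B, ∀ hj : s j ∈ B,
      dist (ℓ i) (ℓ j) ≤ β (⟨s i, hi⟩, ⟨s j, hj⟩) := by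
    intro i j hi hj
    have hdist : Tendsto (fun n => dist (gg n i) (gg n j)) (𝒰 : Filter ℕ)
        (𝓝 (dist (ℓ i) (ℓ j))) := (hℓ i).dist (hℓ j)
    refine le_of_tendsto hdist ?_
    refine (Filter.eventually_atTop.2 ⟨max i j, fun n hn => ?_⟩).filter_mono hUat
    exact (hggd n i j (le_trans (le_max_left _ _) hn) (le_trans (le_max_right _ _) hn)).2.2 hi hj
  -- approximating sequences tendsto
  have htend : ∀ (x : X) (j : ℕ → ℕ), (∀ k : ℕ, dist x (s (j k)) < 1 / (k + 1)) →
      Tendsto (fun k => s (j k)) atTop (𝓝 x) := by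
    intro x j hj
    rw [tendsto_iff_dist_tendsto_zero]
    refine squeeze_zero (fun k => dist_nonneg) (fun k => ?_)
      tendsto_one_div_add_atTop_nhds_zero_nat
    rw [dist_comm]
    exact (hj k).le
  have hsig : ∀ (x : X) (k : ℕ), ∃ i, dist x (s i) < 1 / (k + 1) := by
    intro x k
    refine happrox x _ ?_
    positivity
  choose σ hσ using hsig
  have hsx : ∀ x : X, Tendsto (fun k => s (σ x k)) atTop (𝓝 x) := fun x => htend x (σ x) (hσ x)
  -- Cauchy and limits
  have hCauchy : ∀ x : X, CauchySeq fun k => ℓ (σ x k) := by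
    intro x
    rw [Metric.cauchySeq_iff]
    intro ε hε
    obtain ⟨N, hN⟩ := Metric.cauchySeq_iff.1 (hsx x).cauchySeq (ε / D) (by positivity)
    refine ⟨N, fun m hm k hk => ?_⟩
    have h1 := (hP12 (σ x m) (σ x k)).2
    have h2 : D * dist (s (σ x m)) (s (σ x k)) < D * (ε / D) :=
      mul_lt_mul_of_pos_left (hN m hm k hk) hD0
    rw [mul_div_cancel₀ ε (ne_of_gt hD0)] at h2
    exact lt_of_le_of_lt h1 h2
  have hFex : ∀ x : X, ∃ a : V, Tendsto (fun k => ℓ (σ x k)) atTop (𝓝 a) := fun x =>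
    cauchySeq_tendsto_of_complete (hCauchy x)
  choose F hFl using hFex
  -- key: any approximating sequence works
  have hkey : ∀ (x : X) (j : ℕ → ℕ), Tendsto (fun k => s (j k)) atTop (𝓝 x) →
      Tendsto (fun k => ℓ (j k)) atTop (𝓝 (F x)) := by
    intro x j hj
    rw [tendsto_iff_dist_tendsto_zero]
    have h1 : Tendsto (fun k => dist (s (j k)) (s (σ x k))) atTop (𝓝 0) := by
      have ha := tendsto_iff_dist_tendsto_zero.1 hj
      have hb := tendsto_iff_dist_tendsto_zero.1 (hsx x)
      exact squeeze_zero (g := fun k => dist (s (j k)) x + dist (s (σ x k)) x)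
        (fun k => dist_nonneg) (fun k => dist_triangle_right _ _ x) (by simpa using ha.add hb)
    have hbound : ∀ k, dist (ℓ (j k)) (F x) ≤
        D * dist (s (j k)) (s (σ x k)) + dist (ℓ (σ x k)) (F x) := fun k =>
      (dist_triangle _ _ _).trans (add_le_add_left (hP12 _ _).2 _)
    have hlim0 : Tendsto
        (fun k => D * dist (s (j k)) (s (σ x k)) + dist (ℓ (σ x k)) (F x)) atTop (𝓝 0) := by
      have h3 := tendsto_iff_dist_tendsto_zero.1 (hFl x)
      simpa using (h1.const_mul D).add h3
    exact squeeze_zero (fun k => dist_nonneg) hbound hlim0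
  refine ⟨F, ?_, ?_, ?_⟩
  · intro x y
    have hdist : Tendsto (fun k => dist (ℓ (σ x k)) (ℓ (σ y k))) atTop
        (𝓝 (dist (F x) (F y))) := (hFl x).dist (hFl y)
    have hsd : Tendsto (fun k => dist (s (σ x k)) (s (σ y k))) atTop (𝓝 (dist x y)) :=
      (hsx x).dist (hsx y)
    exact ⟨le_of_tendsto_of_tendsto' hsd hdist fun k => (hP12 _ _).1,
      le_of_tendsto_of_tendsto' hdist (hsd.const_mul D) fun k => (hP12 _ _).2⟩
  · intro x y hx hy
    have hxseq : ∀ k : ℕ, ∃ i, s i ∈ A ∧ dist x (s i) < 1 / (k + 1) := fun k =>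
      happroxA x hx _ (by positivity)
    have hyseq : ∀ k : ℕ, ∃ i, s i ∈ A ∧ dist y (s i) < 1 / (k + 1) := fun k =>
      happroxA y hy _ (by positivity)
    choose jx hjxA hjxd using hxseq
    choose jy hjyA hjyd using hyseq
    have hLx := hkey x jx (htend x jx hjxd)
    have hLy := hkey y jy (htend y jy hjyd)
    have hdist : Tendsto (fun k => dist (ℓ (jx k)) (ℓ (jy k))) atTop
        (𝓝 (dist (F x) (F y))) := hLx.dist hLy
    have hsub : Tendsto (fun k => (((⟨s (jx k), hjxA k⟩ : A), (⟨s (jy k), hjyA k⟩ : A)) : A × A))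
        atTop (𝓝 (⟨x, hx⟩, ⟨y, hy⟩)) := by
      refine Filter.Tendsto.prodMk_nhds ?_ ?_
      · exact tendsto_subtype_rng.2 (htend x jx hjxd)
      · exact tendsto_subtype_rng.2 (htend y jy hjyd)
    have hαt : Tendsto (fun k => α (⟨s (jx k), hjxA k⟩, ⟨s (jy k), hjyA k⟩)) atTop
        (𝓝 (α (⟨x, hx⟩, ⟨y, hy⟩))) := (hα.tendsto _).comp hsub
    exact le_of_tendsto_of_tendsto' hdist hαt fun k => hP3 _ _ _ _
  · intro x y hx hy
    have hxseq : ∀ k : ℕ, ∃ i, s i ∈ B ∧ dist x (s i) < 1 / (k + 1) := fun k =>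
      happroxB x hx _ (by positivity)
    have hyseq : ∀ k : ℕ, ∃ i, s i ∈ B ∧ dist y (s i) < 1 / (k + 1) := fun k =>
      happroxB y hy _ (by positivity)
    choose jx hjxB hjxd using hxseq
    choose jy hjyB hjyd using hyseq
    have hLx := hkey x jx (htend x jx hjxd)
    have hLy := hkey y jy (htend y jy hjyd)
    have hdist : Tendsto (fun k => dist (ℓ (jx k)) (ℓ (jy k))) atTop
        (𝓝 (dist (F x) (F y))) := hLx.dist hLy
    have hsub : Tendsto (fun k => (((⟨s (jx k), hjxB k⟩ : B), (⟨s (jy k), hjyB k⟩ : B)) : B × B))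
        atTop (𝓝 (⟨x, hx⟩, ⟨y, hy⟩)) := by
      refine Filter.Tendsto.prodMk_nhds ?_ ?_
      · exact tendsto_subtype_rng.2 (htend x jx hjxd)
      · exact tendsto_subtype_rng.2 (htend y jy hjyd)
    have hβt : Tendsto (fun k => β (⟨s (jx k), hjxB k⟩, ⟨s (jy k), hjyB k⟩)) atTop
        (𝓝 (β (⟨x, hx⟩, ⟨y, hy⟩))) := (hβ.tendsto _).comp hsub
    exact le_of_tendsto_of_tendsto' hdist hβt fun k => hP4 _ _ _ _
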